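/- Let R be a Noetherian integral domain with fraction field K, and let R⁺ be the integral closure of R in an algebraic closure of K. If R⁺ is a solid R-algebra, then R is a Japanese ring: for every finite field extension L of K, the integral closure of R in L is a finitely generated R-module. -/

import Mathlib

universe u

/-- **Solidity of the absolute integral closure implies the Japanese property.**
Let `R` be a Noetherian integral domain with fraction field `K`, let `Ω` be an algebraic
closure of `K`, and let `R⁺ = integralClosure R Ω` be the absolute integral closure of `R`.
If `R⁺` is a solid `R`-algebra (there is a nonzero `R`-linear map `R⁺ → R`), then `R` is
Japanese: for every finite field extension `L` of `K`, the integral closure of `R` in `L` is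
a finitely generated `R`-module. -/
theorem japanese_of_absolute_integral_closure_solid
    (R : Type u) [CommRing R] [IsDomain R] [IsNoetherianRing R]
    (K : Type u) [Field K] [Algebra R K] [IsFractionRing R K]
    (Ω : Type u) [Field Ω] [Algebra K Ω] [IsAlgClosure K Ω]
    [Algebra R Ω] [IsScalarTower R K Ω]
    (hsolid : ∃ f : integralClosure R Ω →ₗ[R] R, f ≠ 0) :
    ∀ (L : Type u) [Field L] [Algebra K L] [Algebra R L] [IsScalarTower R K L],
      FiniteDimensional K L → Module.Finite R (integralClosure R L) := by
  classical
  obtain ⟨f, hf⟩ := hsolid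
  obtain ⟨ω, hω⟩ : ∃ ω : integralClosure R Ω, f ω ≠ 0 := by
    by_contra h
    push_neg at h
    exact hf (LinearMap.ext fun x => h x)
  intro L _ _ _ _ hfin
  haveI := hfin
  haveI : IsAlgClosed Ω := IsAlgClosure.isAlgClosed K
  set n := Module.finrank K L with hn
  let b : Module.Basis (Fin n) K L := Module.finBasis K L
  obtain ⟨y, hy0, hy⟩ := exists_integral_multiples R K (L := L) (Finset.univ.image b)
  set x : Fin n → L := fun i => y • b i with hxdef
  have hxint : ∀ i, IsIntegral R (x i) :=
    fun i => hy _ (Finset.mem_image_of_mem b (Finset.mem_univ i))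
  have hyK : algebraMap R K y ≠ 0 := fun h => hy0 (IsFractionRing.injective R K (by simp [h]))
  have hxspan : (⊤ : Submodule K L) ≤ Submodule.span K (Set.range x) := by
    rw [← b.span_eq]
    refine Submodule.span_le.2 ?_
    rintro _ ⟨i, rfl⟩
    have hxi : x i = (algebraMap R K y) • b i := by
      rw [hxdef]; simp [algebraMap_smul]
    have h2 := Submodule.smul_mem (Submodule.span K (Set.range x))
      ((algebraMap R K y)⁻¹) (Submodule.subset_span ⟨i, rfl⟩)
    rwa [hxi, smul_smul, inv_mul_cancel₀ hyK, one_smul] at h2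
  let jR : L →ₐ[R] Ω := (IsAlgClosed.lift (R := K) (S := L) (M := Ω)).restrictScalars R
  have hmem : ∀ c : integralClosure R L, jR c ∈ integralClosure R Ω :=
    fun c => c.2.map jR
  let ψ : integralClosure R L →ₐ[R] integralClosure R Ω :=
    AlgHom.codRestrict (jR.comp (integralClosure R L).val) (integralClosure R Ω) hmem
  let ξ : Fin n → integralClosure R Ω := fun i => ⟨jR (x i), (hxint i).map jR⟩
  let g : integralClosure R L →ₗ[R] (Fin n → R) :=
    LinearMap.pi fun i => f ∘ₗ (LinearMap.mulLeft R ω) ∘ₗ (LinearMap.mulRight R (ξ i)) ∘ₗ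
      ψ.toLinearMap
  have hg : ∀ c i, g c i = f (ω * (ψ c * ξ i)) := fun c i => rfl
  have hginj : Function.Injective g := by
    rw [injective_iff_map_eq_zero]
    intro c hc
    by_contra hc0
    have hcL : (c : L) ≠ 0 := fun h => hc0 (Subtype.ext h)
    have hinv : (c : L)⁻¹ ∈ Submodule.span K (Set.range x) := hxspan trivial
    rw [Submodule.mem_span_range_iff_exists_fun] at hinv
    obtain ⟨k, hk⟩ := hinv
    obtain ⟨s, hs⟩ := IsLocalization.exist_integer_multiples_of_finite
      (nonZeroDivisors R) (S := K) k
    choose a ha using hs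
    have key : (s : R) • (1 : L) = ∑ i, a i • ((c : L) * x i) := by
      have h1 : (s : R) • (1 : L) = (c : L) * ((s : R) • (c : L)⁻¹) := by
        rw [mul_smul_comm, mul_inv_cancel₀ hcL]
      rw [h1, ← hk, Finset.smul_sum, Finset.mul_sum]
      refine Finset.sum_congr rfl fun i _ => ?_
      rw [mul_smul_comm, mul_smul_comm, ← algebraMap_smul K (a i) ((c : L) * x i), ha i,
        smul_assoc]
    have keyA : ((s : R) • ω : integralClosure R Ω) = ∑ i, a i • (ω * (ψ c * ξ i)) := by
      apply Subtype.ext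
      simp only [SetLike.val_smul, AddSubmonoidClass.coe_finset_sum, MulMemClass.coe_mul]
      calc (s : R) • (ω : Ω) = (ω : Ω) * ((s : R) • (1 : Ω)) := by
            rw [mul_smul_comm, mul_one]
        _ = (ω : Ω) * jR ((s : R) • (1 : L)) := by rw [map_smul, map_one]
        _ = (ω : Ω) * jR (∑ i, a i • ((c : L) * x i)) := by rw [key]
        _ = (ω : Ω) * ∑ i, a i • (jR c * jR (x i)) := by
            rw [map_sum]; simp only [map_smul, map_mul]
        _ = ∑ i, a i • ((ω : Ω) * (jR c * jR (x i))) := by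
            rw [Finset.mul_sum]; simp only [mul_smul_comm]
    have hfs : (s : R) * f ω = 0 := by
      calc (s : R) * f ω = f ((s : R) • ω) := by rw [map_smul, smul_eq_mul]
        _ = ∑ i, a i • f (ω * (ψ c * ξ i)) := by rw [keyA, map_sum]; simp only [map_smul]
        _ = ∑ i, a i • (g c i) := by simp only [hg]
        _ = 0 := by simp only [hc, Pi.zero_apply, smul_zero, Finset.sum_const_zero]
    rcases mul_eq_zero.mp hfs with h | h
    · exact nonZeroDivisors.coe_ne_zero s h
    · exact hω h
  haveI : IsNoetherian R (Fin n → R) := inferInstance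
  exact Module.Finite.of_injective g hginj
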